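/- The regularized least-squares objective Q ↦ (1/2)·Σ_{x∈X} d_β(x)·(Q(x) − y(x))² + λ·( Σ_{x∈X} ω(x)·Q(x) − Σ_{x∈X} d(x)·Q(x) ) over functions Q : X → ℝ has the unique minimizer Q*(x) = y(x) − λ·(ω(x) − d(x))/d_β(x) for all x ∈ X. -/
import Mathlib


open Finset

noncomputable section

/-- The regularized least-squares objective
`Q ↦ (1/2) ∑_x d_β(x) (Q(x) − y(x))² + λ (∑_x ω(x) Q(x) − ∑_x d(x) Q(x))`. -/
def regLSObjective {X : Type*} [Fintype X] (dβ y ω d : X → ℝ) (lam : ℝ) (Q : X → ℝ) : ℝ :=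
  (1 / 2) * ∑ x : X, dβ x * (Q x - y x) ^ 2
    + lam * (∑ x : X, ω x * Q x - ∑ x : X, d x * Q x)

/-- the regularized least-squares objective has the unique minimizer
`Q*(x) = y(x) − λ (ω(x) − d(x)) / d_β(x)`. -/
theorem regLS_minimizer {X : Type*} [Fintype X] [Nonempty X]
    (dβ : X → ℝ) (hdβ : ∀ x, 0 < dβ x)
    (y ω d : X → ℝ) (hω : ∀ x, 0 ≤ ω x) (hd : ∀ x, 0 ≤ d x) (lam : ℝ) :
    (∀ Q : X → ℝ,
        regLSObjective dβ y ω d lam (fun x => y x - lam * (ω x - d x) / dβ x) ≤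
          regLSObjective dβ y ω d lam Q)
    ∧ ∀ Q : X → ℝ,
        regLSObjective dβ y ω d lam Q =
          regLSObjective dβ y ω d lam (fun x => y x - lam * (ω x - d x) / dβ x) →
        Q = fun x => y x - lam * (ω x - d x) / dβ x := by
  set Qs : X → ℝ := fun x => y x - lam * (ω x - d x) / dβ x with hQs
  have key : ∀ Q : X → ℝ,
      regLSObjective dβ y ω d lam Q =
        regLSObjective dβ y ω d lam Qs
          + (1 / 2) * ∑ x : X, dβ x * (Q x - Qs x) ^ 2 := by
    intro Q
    simp only [regLSObjective, hQs, Finset.mul_sum, ← Finset.sum_sub_distrib,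
      ← Finset.sum_add_distrib]
    refine Finset.sum_congr rfl fun x _ => ?_
    have h := (hdβ x).ne'
    field_simp
    ring
  constructor
  · intro Q
    rw [key Q]
    have : 0 ≤ (1 / 2) * ∑ x : X, dβ x * (Q x - Qs x) ^ 2 := by
      apply mul_nonneg (by norm_num)
      exact Finset.sum_nonneg fun x _ =>
        mul_nonneg (hdβ x).le (sq_nonneg _)
    linarith
  · intro Q hQ
    rw [key Q] at hQ
    have hsum : ∑ x : X, dβ x * (Q x - Qs x) ^ 2 = 0 := by linarith
    funext x
    have hz : ∀ x ∈ Finset.univ, (0:ℝ) ≤ dβ x * (Q x - Qs x) ^ 2 :=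
      fun x _ => mul_nonneg (hdβ x).le (sq_nonneg _)
    have := (Finset.sum_eq_zero_iff_of_nonneg hz).mp hsum x (Finset.mem_univ x)
    have h2 : (Q x - Qs x) ^ 2 = 0 := by
      rcases mul_eq_zero.mp this with h | h
      · exact absurd h (hdβ x).ne'
      · exact h
    have := pow_eq_zero_iff (n := 2) (by norm_num) |>.mp h2
    have : Q x = Qs x := by linarith
    simpa [hQs] using this
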